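/- (Cokernel Complex Lemma.) In the setting of the commutative diagram described in the context, form the complex 0 → Cok α → Cok β → Cok γ → 0, where Cok α = A''/range α, Cok β = B''/range β, Cok γ = C''/range γ and the maps are induced by a'' and g'' (these are well defined and compose to zero), and form the complex 0 → Cok g' → Cok g → Cok g'' → 0, where Cok g' = C'/range g', Cok g = C/range g, Cok g'' = C''/range g'' and the maps are induced by γ' and γ (again well defined, composing to zero). Then these two complexes have isomorphic homology in each position; explicitly, there are R-module isomorphisms (i) ker(Cok α → Cok β) ≅ ker(Cok g' → Cok g), (ii) ker(Cok β → Cok γ)/range(Cok α → Cok β) ≅ ker(Cok g → Cok g'')/range(Cok g' → Cok g), and (iii) Cok γ / range(Cok β → Cok γ) ≅ Cok g'' / range(Cok g → Cok g''). -/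
import Mathlib


/-- The Cokernel Complex Lemma: the complexes `0 → Cok α → Cok β → Cok γ → 0`
and `0 → Cok g' → Cok g → Cok g'' → 0` have isomorphic homology in each position. -/
theorem cokernel_complex_lemma {R : Type*} [Ring R]
    {A A'' B' B B'' C' C C'' : Type*}
    [AddCommGroup A] [AddCommGroup A'']
    [AddCommGroup B'] [AddCommGroup B] [AddCommGroup B'']
    [AddCommGroup C'] [AddCommGroup C] [AddCommGroup C'']
    [Module R A] [Module R A'']
    [Module R B'] [Module R B] [Module R B'']
    [Module R C'] [Module R C] [Module R C'']
    (α : A →ₗ[R] A'')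
    (β' : B' →ₗ[R] B) (β : B →ₗ[R] B'')
    (γ' : C' →ₗ[R] C) (γ : C →ₗ[R] C'')
    (a : A →ₗ[R] B) (a'' : A'' →ₗ[R] B'')
    (g' : B' →ₗ[R] C') (g : B →ₗ[R] C) (g'' : B'' →ₗ[R] C'')
    -- exactness of the row B' → B → B'' at B
    (hrow2 : LinearMap.ker β = LinearMap.range β')
    -- exactness of the row 0 → C' → C → C''
    (hγ' : Function.Injective γ') (hrow3 : LinearMap.ker γ = LinearMap.range γ')
    -- exactness of the column A → B → C at B
    (hcol2 : LinearMap.ker g = LinearMap.range a)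
    -- exactness of the column 0 → A'' → B'' → C''
    (ha'' : Function.Injective a'') (hcol3 : LinearMap.ker g'' = LinearMap.range a'')
    -- commutativity of the squares
    (sq1 : a'' ∘ₗ α = β ∘ₗ a) (sq2 : g'' ∘ₗ β = γ ∘ₗ g) (sq3 : g ∘ₗ β' = γ' ∘ₗ g')
    -- the map Cok α → Cok β induced by a''
    (φ₁ : (A'' ⧸ LinearMap.range α) →ₗ[R] (B'' ⧸ LinearMap.range β))
    (hφ₁ : ∀ x : A'', φ₁ (Submodule.Quotient.mk x) = Submodule.Quotient.mk (a'' x))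
    -- the map Cok β → Cok γ induced by g''
    (φ₂ : (B'' ⧸ LinearMap.range β) →ₗ[R] (C'' ⧸ LinearMap.range γ))
    (hφ₂ : ∀ x : B'', φ₂ (Submodule.Quotient.mk x) = Submodule.Quotient.mk (g'' x))
    -- the map Cok g' → Cok g induced by γ'
    (ψ₁ : (C' ⧸ LinearMap.range g') →ₗ[R] (C ⧸ LinearMap.range g))
    (hψ₁ : ∀ x : C', ψ₁ (Submodule.Quotient.mk x) = Submodule.Quotient.mk (γ' x))
    -- the map Cok g → Cok g'' induced by γ
    (ψ₂ : (C ⧸ LinearMap.range g) →ₗ[R] (C'' ⧸ LinearMap.range g''))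
    (hψ₂ : ∀ x : C, ψ₂ (Submodule.Quotient.mk x) = Submodule.Quotient.mk (γ x)) :
    φ₂ ∘ₗ φ₁ = 0 ∧ ψ₂ ∘ₗ ψ₁ = 0 ∧
    Nonempty (↥(LinearMap.ker φ₁) ≃ₗ[R] ↥(LinearMap.ker ψ₁)) ∧
    Nonempty ((↥(LinearMap.ker φ₂) ⧸
        Submodule.comap (LinearMap.ker φ₂).subtype (LinearMap.range φ₁)) ≃ₗ[R]
      (↥(LinearMap.ker ψ₂) ⧸
        Submodule.comap (LinearMap.ker ψ₂).subtype (LinearMap.range ψ₁))) ∧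
    Nonempty (((C'' ⧸ LinearMap.range γ) ⧸ LinearMap.range φ₂) ≃ₗ[R]
      ((C'' ⧸ LinearMap.range g'') ⧸ LinearMap.range ψ₂)) := by
  classical
  have sq1' : ∀ x, a'' (α x) = β (a x) := fun x => LinearMap.ext_iff.mp sq1 x
  have sq2' : ∀ x, g'' (β x) = γ (g x) := fun x => LinearMap.ext_iff.mp sq2 x
  have sq3' : ∀ x, g (β' x) = γ' (g' x) := fun x => LinearMap.ext_iff.mp sq3 x
  have hγγ' : ∀ c', γ (γ' c') = 0 := fun c' => by
    have : γ' c' ∈ LinearMap.ker γ := hrow3 ▸ LinearMap.mem_range_self γ' c'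
    exact this
  have hg''a'' : ∀ x, g'' (a'' x) = 0 := fun x => by
    have : a'' x ∈ LinearMap.ker g'' := hcol3 ▸ LinearMap.mem_range_self a'' x
    exact this
  have hga : ∀ x, g (a x) = 0 := fun x => by
    have : a x ∈ LinearMap.ker g := hcol2 ▸ LinearMap.mem_range_self a x
    exact this
  refine ⟨?_, ?_, ?_, ?_, ?_⟩
  -- Part 1 : φ₂ ∘ φ₁ = 0
  · apply LinearMap.ext; intro z
    obtain ⟨x, rfl⟩ := Submodule.Quotient.mk_surjective _ z
    simp only [LinearMap.comp_apply, hφ₁, hφ₂, hg''a'', LinearMap.zero_apply]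
    exact Submodule.Quotient.mk_eq_zero _ |>.mpr (by simp [hg''a''])
  -- Part 2 : ψ₂ ∘ ψ₁ = 0
  · apply LinearMap.ext; intro z
    obtain ⟨c', rfl⟩ := Submodule.Quotient.mk_surjective _ z
    simp only [LinearMap.comp_apply, hψ₁, hψ₂, LinearMap.zero_apply]
    exact Submodule.Quotient.mk_eq_zero _ |>.mpr (by simp [hγγ'])
  -- Part 3 : ker φ₁ ≃ ker ψ₁
  · set Q : Submodule R (A'' × B) :=
      LinearMap.ker ((a'' ∘ₗ LinearMap.fst R A'' B) - (β ∘ₗ LinearMap.snd R A'' B)) with hQdef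
    have hQ : ∀ q : A'' × B, q ∈ Q ↔ a'' q.1 = β q.2 := by
      intro q
      rw [hQdef, LinearMap.mem_ker, LinearMap.sub_apply, sub_eq_zero]
      rfl
    -- the map Q → ker φ₁
    have hFmem : ∀ q : Q, (((LinearMap.range α).mkQ ∘ₗ (LinearMap.fst R A'' B) ∘ₗ Q.subtype) q)
        ∈ LinearMap.ker φ₁ := by
      rintro ⟨⟨x, b⟩, hq⟩
      rw [hQ] at hq
      simp only [LinearMap.comp_apply, Submodule.subtype_apply, Submodule.mkQ_apply,
        LinearMap.mem_ker, hφ₁]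
      exact (Submodule.Quotient.mk_eq_zero _).mpr ⟨b, hq.symm⟩
    set F : Q →ₗ[R] LinearMap.ker φ₁ :=
      LinearMap.codRestrict _ ((LinearMap.range α).mkQ ∘ₗ (LinearMap.fst R A'' B) ∘ₗ Q.subtype)
        hFmem with hFdef
    have hFapp : ∀ q : Q, (F q : A'' ⧸ LinearMap.range α)
        = Submodule.Quotient.mk (q : A'' × B).1 := fun q => rfl
    -- the canonical map Q → C'
    have hgmem : ∀ q : Q, ((g ∘ₗ (LinearMap.snd R A'' B) ∘ₗ Q.subtype) q)
        ∈ LinearMap.range γ' := by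
      rintro ⟨⟨x, b⟩, hq⟩
      rw [hQ] at hq
      have : γ (g b) = 0 := by rw [← sq2', ← hq, hg''a'']
      rw [← hrow3]
      exact this
    set e := LinearEquiv.ofInjective γ' hγ' with hedef
    set G₀ : Q →ₗ[R] C' :=
      (e.symm : LinearMap.range γ' →ₗ[R] C') ∘ₗ
        LinearMap.codRestrict _ (g ∘ₗ (LinearMap.snd R A'' B) ∘ₗ Q.subtype) hgmem with hG₀def
    have hG₀ : ∀ q : Q, γ' (G₀ q) = g (q : A'' × B).2 := by
      intro q
      have h1 : γ' (G₀ q) = ((e (e.symm (⟨g (q : A'' × B).2, hgmem q⟩))) : C) := by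
        rw [hedef, LinearEquiv.ofInjective_apply]; rfl
      rw [h1, LinearEquiv.apply_symm_apply]
    -- the map Q → ker ψ₁
    have hGmem : ∀ q : Q, (((LinearMap.range g').mkQ ∘ₗ G₀) q) ∈ LinearMap.ker ψ₁ := by
      intro q
      simp only [LinearMap.comp_apply, Submodule.mkQ_apply, LinearMap.mem_ker, hψ₁, hG₀]
      exact (Submodule.Quotient.mk_eq_zero _).mpr ⟨(q : A'' × B).2, rfl⟩
    set G : Q →ₗ[R] LinearMap.ker ψ₁ :=
      LinearMap.codRestrict _ ((LinearMap.range g').mkQ ∘ₗ G₀) hGmem with hGdef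
    have hGapp : ∀ q : Q, (G q : C' ⧸ LinearMap.range g')
        = Submodule.Quotient.mk (G₀ q) := fun q => rfl
    -- surjectivity of F
    have hFsurj : Function.Surjective F := by
      rintro ⟨z, hz⟩
      obtain ⟨x, rfl⟩ := Submodule.Quotient.mk_surjective _ z
      rw [LinearMap.mem_ker, hφ₁, Submodule.Quotient.mk_eq_zero] at hz
      obtain ⟨b, hb⟩ := hz
      exact ⟨⟨(x, b), (hQ _).mpr hb.symm⟩, rfl⟩
    -- surjectivity of G
    have hGsurj : Function.Surjective G := by
      rintro ⟨z, hz⟩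
      obtain ⟨c', rfl⟩ := Submodule.Quotient.mk_surjective _ z
      rw [LinearMap.mem_ker, hψ₁, Submodule.Quotient.mk_eq_zero] at hz
      obtain ⟨b, hb⟩ := hz
      have hβb : β b ∈ LinearMap.range a'' := by
        rw [← hcol3, LinearMap.mem_ker, sq2', hb, hγγ']
      obtain ⟨x, hx⟩ := hβb
      refine ⟨⟨(x, b), (hQ _).mpr hx⟩, ?_⟩
      apply Subtype.ext
      rw [hGapp]
      congr 1
      apply hγ'
      rw [hG₀]
      exact hb
    -- equality of kernels
    have hker : LinearMap.ker F = LinearMap.ker G := by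
      ext q
      obtain ⟨⟨x, b⟩, hq⟩ := q
      have hq' : a'' x = β b := (hQ _).mp hq
      simp only [LinearMap.mem_ker]
      rw [← Subtype.coe_inj, hFapp, ← Subtype.coe_inj, hGapp]
      simp only [Submodule.coe_zero, Submodule.Quotient.mk_eq_zero]
      constructor
      · rintro ⟨a₁, ha₁⟩
        replace ha₁ : α a₁ = x := ha₁
        -- x = α a₁, so β b = a'' α a₁ = β (a a₁), so b - a a₁ ∈ range β'
        have hb : b - a a₁ ∈ LinearMap.ker β := by
          rw [LinearMap.mem_ker, map_sub, ← hq', ← sq1', ha₁, sub_self]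
        rw [hrow2] at hb
        obtain ⟨b₀, hb₀⟩ := hb
        refine ⟨b₀, hγ' ?_⟩
        rw [hG₀]
        show γ' (g' b₀) = g b
        rw [← sq3', hb₀, map_sub, hga, sub_zero]
      · rintro ⟨b₀, hb₀⟩
        -- γ' (g' b₀) = g b, so b - β' b₀ ∈ ker g = range a
        have hgb : γ' (g' b₀) = g b := by rw [hb₀]; exact hG₀ _
        have hb : b - β' b₀ ∈ LinearMap.ker g := by
          rw [LinearMap.mem_ker, map_sub, sq3', hgb, sub_self]
        rw [hcol2] at hb
        obtain ⟨a₁, ha₁⟩ := hb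
        refine ⟨a₁, ha'' ?_⟩
        have hβ' : β (β' b₀) = 0 := by
          have : β' b₀ ∈ LinearMap.ker β := by rw [hrow2]; exact ⟨b₀, rfl⟩
          exact this
        rw [sq1', hq', ha₁, map_sub, hβ', sub_zero]
    exact ⟨(F.quotKerEquivOfSurjective hFsurj).symm.trans
      ((Submodule.quotEquivOfEq _ _ hker).trans (G.quotKerEquivOfSurjective hGsurj))⟩
  -- Part 4 : middle homologies
  · set P : Submodule R (B'' × C) :=
      LinearMap.ker ((g'' ∘ₗ LinearMap.fst R B'' C) - (γ ∘ₗ LinearMap.snd R B'' C)) with hPdef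
    have hP : ∀ p : B'' × C, p ∈ P ↔ g'' p.1 = γ p.2 := by
      intro p
      rw [hPdef, LinearMap.mem_ker, LinearMap.sub_apply, sub_eq_zero]
      rfl
    have hfmem : ∀ p : P, (((LinearMap.range β).mkQ ∘ₗ (LinearMap.fst R B'' C) ∘ₗ P.subtype) p)
        ∈ LinearMap.ker φ₂ := by
      rintro ⟨⟨x, c⟩, hp⟩
      rw [hP] at hp
      simp only [LinearMap.comp_apply, Submodule.subtype_apply, Submodule.mkQ_apply,
        LinearMap.mem_ker, hφ₂]
      exact (Submodule.Quotient.mk_eq_zero _).mpr ⟨c, hp.symm⟩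
    set f : P →ₗ[R] LinearMap.ker φ₂ :=
      LinearMap.codRestrict _ ((LinearMap.range β).mkQ ∘ₗ (LinearMap.fst R B'' C) ∘ₗ P.subtype)
        hfmem with hfdef
    have hfapp : ∀ p : P, (f p : B'' ⧸ LinearMap.range β)
        = Submodule.Quotient.mk (p : B'' × C).1 := fun p => rfl
    have hhmem : ∀ p : P, (((LinearMap.range g).mkQ ∘ₗ (LinearMap.snd R B'' C) ∘ₗ P.subtype) p)
        ∈ LinearMap.ker ψ₂ := by
      rintro ⟨⟨x, c⟩, hp⟩
      rw [hP] at hp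
      simp only [LinearMap.comp_apply, Submodule.subtype_apply, Submodule.mkQ_apply,
        LinearMap.mem_ker, hψ₂]
      exact (Submodule.Quotient.mk_eq_zero _).mpr ⟨x, hp⟩
    set h : P →ₗ[R] LinearMap.ker ψ₂ :=
      LinearMap.codRestrict _ ((LinearMap.range g).mkQ ∘ₗ (LinearMap.snd R B'' C) ∘ₗ P.subtype)
        hhmem with hhdef
    have hhapp : ∀ p : P, (h p : C ⧸ LinearMap.range g)
        = Submodule.Quotient.mk (p : B'' × C).2 := fun p => rfl
    set Kφ := Submodule.comap (LinearMap.ker φ₂).subtype (LinearMap.range φ₁) with hKφdef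
    set Kψ := Submodule.comap (LinearMap.ker ψ₂).subtype (LinearMap.range ψ₁) with hKψdef
    set Φ : P →ₗ[R] (LinearMap.ker φ₂ ⧸ Kφ) := Kφ.mkQ ∘ₗ f with hΦdef
    set Ψ : P →ₗ[R] (LinearMap.ker ψ₂ ⧸ Kψ) := Kψ.mkQ ∘ₗ h with hΨdef
    -- surjectivity of f (onto ker φ₂), hence of Φ
    have hfsurj : Function.Surjective f := by
      rintro ⟨z, hz⟩
      obtain ⟨x, rfl⟩ := Submodule.Quotient.mk_surjective _ z
      rw [LinearMap.mem_ker, hφ₂, Submodule.Quotient.mk_eq_zero] at hz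
      obtain ⟨c, hc⟩ := hz
      exact ⟨⟨(x, c), (hP _).mpr hc.symm⟩, rfl⟩
    have hhsurj : Function.Surjective h := by
      rintro ⟨z, hz⟩
      obtain ⟨c, rfl⟩ := Submodule.Quotient.mk_surjective _ z
      rw [LinearMap.mem_ker, hψ₂, Submodule.Quotient.mk_eq_zero] at hz
      obtain ⟨x, hx⟩ := hz
      exact ⟨⟨(x, c), (hP _).mpr hx⟩, rfl⟩
    have hΦsurj : Function.Surjective Φ := (Kφ.mkQ_surjective).comp hfsurj
    have hΨsurj : Function.Surjective Ψ := (Kψ.mkQ_surjective).comp hhsurj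
    -- membership characterizations
    have hmemΦ : ∀ p : P, p ∈ LinearMap.ker Φ ↔
        ∃ y : A'', ((p : B'' × C).1 - a'' y) ∈ LinearMap.range β := by
      intro p
      rw [hΦdef, LinearMap.mem_ker, LinearMap.comp_apply, Submodule.mkQ_apply, Submodule.Quotient.mk_eq_zero]
      constructor
      · rintro hmem
        rw [hKφdef, Submodule.mem_comap] at hmem
        obtain ⟨z, hz⟩ := hmem
        obtain ⟨y, rfl⟩ := Submodule.Quotient.mk_surjective _ z
        rw [hφ₁] at hz
        have : Submodule.Quotient.mk (a'' y) = (f p : B'' ⧸ LinearMap.range β) := hz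
        rw [hfapp] at this
        refine ⟨y, ?_⟩
        have := (Submodule.Quotient.eq _).mp this.symm
        exact this
      · rintro ⟨y, hy⟩
        rw [hKφdef, Submodule.mem_comap]
        refine ⟨Submodule.Quotient.mk y, ?_⟩
        rw [hφ₁]
        show (Submodule.Quotient.mk (a'' y) : B'' ⧸ LinearMap.range β) = (f p : _)
        rw [hfapp]
        exact (Submodule.Quotient.eq _).mpr (by simpa using (Submodule.neg_mem _ hy))
    have hmemΨ : ∀ p : P, p ∈ LinearMap.ker Ψ ↔
        ∃ c' : C', ((p : B'' × C).2 - γ' c') ∈ LinearMap.range g := by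
      intro p
      rw [hΨdef, LinearMap.mem_ker, LinearMap.comp_apply, Submodule.mkQ_apply, Submodule.Quotient.mk_eq_zero]
      constructor
      · rintro hmem
        rw [hKψdef, Submodule.mem_comap] at hmem
        obtain ⟨z, hz⟩ := hmem
        obtain ⟨c', rfl⟩ := Submodule.Quotient.mk_surjective _ z
        rw [hψ₁] at hz
        have : Submodule.Quotient.mk (γ' c') = (h p : C ⧸ LinearMap.range g) := hz
        rw [hhapp] at this
        exact ⟨c', (Submodule.Quotient.eq _).mp this.symm⟩
      · rintro ⟨c', hc'⟩
        rw [hKψdef, Submodule.mem_comap]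
        refine ⟨Submodule.Quotient.mk c', ?_⟩
        rw [hψ₁]
        show (Submodule.Quotient.mk (γ' c') : C ⧸ LinearMap.range g) = (h p : _)
        rw [hhapp]
        exact (Submodule.Quotient.eq _).mpr (by simpa using (Submodule.neg_mem _ hc'))
    -- equality of kernels
    have hker : LinearMap.ker Φ = LinearMap.ker Ψ := by
      ext p
      rw [hmemΦ, hmemΨ]
      obtain ⟨⟨x, c⟩, hp⟩ := p
      have hp' : g'' x = γ c := (hP _).mp hp
      constructor
      · rintro ⟨y, b, hb⟩
        replace hb : β b = x - a'' y := hb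
        -- x - a'' y = β b ⇒ γ c = g'' x = g'' β b = γ g b ⇒ c - g b ∈ range γ'
        have hc : c - g b ∈ LinearMap.ker γ := by
          rw [LinearMap.mem_ker, map_sub, ← sq2', hb, map_sub, hg''a'', sub_zero, hp',
            sub_self]
        rw [hrow3] at hc
        obtain ⟨c', hc'⟩ := hc
        refine ⟨c', ⟨b, ?_⟩⟩
        show g b = c - γ' c'
        rw [hc']; abel
      · rintro ⟨c', b, hb⟩
        replace hb : g b = c - γ' c' := hb
        -- c - γ' c' = g b ⇒ g'' x = γ c = γ g b = g'' β b ⇒ x - β b ∈ range a''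
        have hx : x - β b ∈ LinearMap.ker g'' := by
          rw [LinearMap.mem_ker, map_sub, hp', sq2', hb, map_sub, hγγ', sub_zero, sub_self]
        rw [hcol3] at hx
        obtain ⟨y, hy⟩ := hx
        refine ⟨y, ⟨b, ?_⟩⟩
        show β b = x - a'' y
        rw [hy]; abel
    exact ⟨(Φ.quotKerEquivOfSurjective hΦsurj).symm.trans
      ((Submodule.quotEquivOfEq _ _ hker).trans (Ψ.quotKerEquivOfSurjective hΨsurj))⟩
  -- Part 5 : cokernels of the cokernel maps
  · have hrφ₂ : LinearMap.range φ₂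
        = (LinearMap.range g'').map (LinearMap.range γ).mkQ := by
      have h1 : φ₂ ∘ₗ (LinearMap.range β).mkQ = (LinearMap.range γ).mkQ ∘ₗ g'' := by
        apply LinearMap.ext; intro x
        simp [hφ₂]
      have h2 : LinearMap.range (φ₂ ∘ₗ (LinearMap.range β).mkQ) = LinearMap.range φ₂ :=
        LinearMap.range_comp_of_range_eq_top _ (Submodule.range_mkQ _)
      rw [← h2, h1, LinearMap.range_comp]
    have hrψ₂ : LinearMap.range ψ₂
        = (LinearMap.range γ).map (LinearMap.range g'').mkQ := by
      have h1 : ψ₂ ∘ₗ (LinearMap.range g).mkQ = (LinearMap.range g'').mkQ ∘ₗ γ := by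
        apply LinearMap.ext; intro x
        simp [hψ₂]
      have h2 : LinearMap.range (ψ₂ ∘ₗ (LinearMap.range g).mkQ) = LinearMap.range ψ₂ :=
        LinearMap.range_comp_of_range_eq_top _ (Submodule.range_mkQ _)
      rw [← h2, h1, LinearMap.range_comp]
    have e1 : ((C'' ⧸ LinearMap.range γ) ⧸ LinearMap.range φ₂)
        ≃ₗ[R] C'' ⧸ (LinearMap.range γ ⊔ LinearMap.range g'') :=
      (Submodule.quotEquivOfEq _ _ hrφ₂).trans
        (Submodule.quotientQuotientEquivQuotientSup _ _)
    have e2 : ((C'' ⧸ LinearMap.range g'') ⧸ LinearMap.range ψ₂)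
        ≃ₗ[R] C'' ⧸ (LinearMap.range g'' ⊔ LinearMap.range γ) :=
      (Submodule.quotEquivOfEq _ _ hrψ₂).trans
        (Submodule.quotientQuotientEquivQuotientSup _ _)
    exact ⟨e1.trans ((Submodule.quotEquivOfEq _ _ (sup_comm _ _)).trans e2.symm)⟩
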